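/- arXiv:2507.00277 — 3 statements merged into one kernel-verified Lean document; each statement's English description precedes it below -/
import Mathlib

section
/- Let m ≥ 1 be a natural number and let a : Fin m → ℕ be a sequence of interval sizes with a j ≥ 1 for every j, ordered from the single queried (left) side inward, so that the outside of interval j equals ∑_{i < j} a i. Let N = ∑_{j} a j. If for every index j with j + 1 < m one has a j + a (j+1) ≥ ∑_{i < j} a i, then (m : ℝ) ≤ max 2 (2 · logb 2 (N : ℝ) + 3). -/
open Real

/-- Interval count in a 1-sided gap: intervals ordered from the queried side
inward, each of size at least 1, satisfying the merge rule
`a j + a (j+1) ≥ ∑_{i < j} a i`, number at most `max 2 (2 log₂ N + 3)`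
where `N` is the total size. -/
theorem merge_rule_one_sided_gap_interval_count
    (m : ℕ) (hm : 1 ≤ m) (a : Fin m → ℕ) (ha : ∀ j, 1 ≤ a j)
    (N : ℕ) (hN : N = ∑ j, a j)
    (hmerge : ∀ j : Fin m, ∀ h : (j : ℕ) + 1 < m,
      a j + a ⟨(j : ℕ) + 1, h⟩ ≥
        ∑ i ∈ Finset.univ.filter (fun i : Fin m => (i : ℕ) < (j : ℕ)), a i) :
    (m : ℝ) ≤ max 2 (2 * logb 2 (N : ℝ) + 3) := by
  rcases eq_or_lt_of_le hm with h1 | h2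
  · have : (m : ℝ) ≤ 2 := by rw [← h1]; norm_num
    exact le_trans this (le_max_left _ _)
  -- m ≥ 2
  set b : ℕ → ℕ := fun i => if h : i < m then a ⟨i, h⟩ else 0 with hb
  set T : ℕ → ℕ := fun j => ∑ i ∈ Finset.range j, b i with hTdef
  have hT : ∀ j, j ≤ m →
      (∑ i ∈ Finset.univ.filter (fun i : Fin m => (i : ℕ) < j), a i) = T j := by
    intro j hj
    rw [Finset.sum_filter, hTdef]
    have h1 : (∑ i : Fin m, if (i : ℕ) < j then a i else 0)
        = ∑ i ∈ Finset.range m, (if i < j then b i else 0) := by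
      rw [← Fin.sum_univ_eq_sum_range (fun i => if i < j then b i else 0) m]
      apply Finset.sum_congr rfl
      intro i _
      simp [hb, i.isLt]
    rw [h1, ← Finset.sum_filter]
    have h2' : (Finset.range m).filter (fun i => i < j) = Finset.range j := by
      ext i
      simp only [Finset.mem_filter, Finset.mem_range]
      omega
    rw [h2']
  -- N = T m
  have hNT : N = T m := by
    rw [hN, ← hT m le_rfl]
    congr 1
    rw [Finset.filter_true_of_mem]
    intro i _; exact i.isLt
  -- doubling step
  have hdouble : ∀ j, j + 2 ≤ m → 2 * T j ≤ T (j + 2) := by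
    intro j hj
    have hjm : j < m := by omega
    have hj1 : j + 1 < m := by omega
    have hmain := hmerge ⟨j, hjm⟩ hj1
    rw [hT j (by omega)] at hmain
    have hTexp : T (j + 2) = T j + b j + b (j + 1) := by
      simp [hTdef, Finset.sum_range_succ, add_assoc]
    have hbj : b j = a ⟨j, hjm⟩ := by simp [hb, hjm]
    have hbj1 : b (j + 1) = a ⟨j + 1, hj1⟩ := by simp [hb, hj1]
    have hmain' : T j ≤ a ⟨j, hjm⟩ + a ⟨j + 1, hj1⟩ := hmain
    rw [hTexp, hbj, hbj1]
    omega
  -- base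
  have hbase : 2 ≤ T 2 := by
    have h0 : (0 : ℕ) < m := by omega
    have h1 : (1 : ℕ) < m := by omega
    have : T 2 = b 0 + b 1 := by simp [hTdef, Finset.sum_range_succ]
    rw [this]
    have := ha ⟨0, h0⟩
    have := ha ⟨1, h1⟩
    simp only [hb, h0, h1, dif_pos]
    omega
  -- induction: 2^k ≤ T (2k)
  have hpow : ∀ k, 1 ≤ k → 2 * k ≤ m → 2 ^ k ≤ T (2 * k) := by
    intro k
    induction k with
    | zero => omega
    | succ n ih =>
      intro _ hle
      rcases Nat.eq_or_lt_of_le (show 1 ≤ n + 1 by omega) with h | h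
      · simpa [← h] using hbase
      · have hn1 : 1 ≤ n := by omega
        have h2n : 2 * n + 2 ≤ m := by omega
        have := ih hn1 (by omega)
        have hd := hdouble (2 * n) h2n
        calc 2 ^ (n + 1) = 2 * 2 ^ n := by ring
          _ ≤ 2 * T (2 * n) := by omega
          _ ≤ T (2 * n + 2) := hd
          _ = T (2 * (n + 1)) := by ring_nf
  have hkey : 2 ^ (m / 2) ≤ N := by
    have h1 : 2 ^ (m / 2) ≤ T (2 * (m / 2)) := hpow (m / 2) (by omega) (by omega)
    have h2 : T (2 * (m / 2)) ≤ T m :=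
      Finset.sum_le_sum_of_subset (Finset.range_subset_range.2 (by omega))
    omega
  -- real part
  have hNpos : (0 : ℝ) < (N : ℝ) := by
    have : 0 < N := lt_of_lt_of_le (Nat.pow_pos (by norm_num)) hkey
    exact_mod_cast this
  have hlog : ((m / 2 : ℕ) : ℝ) ≤ logb 2 (N : ℝ) := by
    have hle : ((2 : ℝ)) ^ (m / 2) ≤ (N : ℝ) := by exact_mod_cast hkey
    have hmono := Real.logb_le_logb_of_le (b := 2) (by norm_num) (by positivity) hle
    calc ((m / 2 : ℕ) : ℝ) = logb 2 ((2 : ℝ) ^ (m / 2)) := by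
          rw [Real.logb_pow]; simp
      _ ≤ logb 2 (N : ℝ) := hmono
  have hm2 : (m : ℝ) ≤ 2 * ((m / 2 : ℕ) : ℝ) + 1 := by
    have : m ≤ 2 * (m / 2) + 1 := by omega
    exact_mod_cast this
  have : (m : ℝ) ≤ 2 * logb 2 (N : ℝ) + 3 := by nlinarith
  exact le_trans this (le_max_right _ _)
end

section
/- Let p ≥ 1 and q ≥ 1 be natural numbers, let a : Fin p → ℕ be the sizes of the left intervals ordered from the left boundary inward and b : Fin q → ℕ the sizes of the right intervals ordered from the right boundary inward, with a j ≥ 1 and b j ≥ 1 for every j. Suppose the merge rule holds on each side: for every j with j + 1 < p, a j + a (j+1) ≥ ∑_{i < j} a i, and for every j with j + 1 < q, b j + b (j+1) ≥ ∑_{i < j} b i. Let N = ∑_{j} a j + ∑_{j} b j. Then (p + q : ℝ) ≤ 4 · logb 2 (N : ℝ) + 2. -/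
open Real

private lemma key_nat (a : ℕ → ℕ) :
    ∀ p, 1 ≤ p → (∀ i < p, 1 ≤ a i) →
    (∀ j, j + 1 < p → ∑ i ∈ Finset.range j, a i ≤ a j + a (j + 1)) →
    2 ^ (p / 2) ≤ ∑ i ∈ Finset.range p, a i := by
  intro p
  induction p using Nat.strong_induction_on with
  | _ p ih =>
    intro hp h1 hm
    match p, hp with
    | 1, _ =>
      simpa using h1 0 (by omega)
    | 2, _ =>
      have h0 := h1 0 (by omega)
      have h2 := h1 1 (by omega)
      simp [Finset.sum_range_succ]
      omega
    | (m + 3), _ =>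
      have hih := ih (m + 1) (by omega) (by omega)
        (fun i hi => h1 i (by omega)) (fun j hj => hm j (by omega))
      have hstep := hm (m + 1) (by omega)
      have hstep' : ∑ i ∈ Finset.range (m + 1), a i ≤ a (m + 1) + a (m + 2) :=
        hstep
      have hd : (m + 3) / 2 = (m + 1) / 2 + 1 := by omega
      rw [Finset.sum_range_succ, Finset.sum_range_succ, hd, pow_succ]
      omega

private lemma key_fin (p : ℕ) (hp : 1 ≤ p) (a : Fin p → ℕ)
    (ha : ∀ j, 1 ≤ a j)
    (hmerge : ∀ j : Fin p, ∀ h : (j : ℕ) + 1 < p,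
      a j + a ⟨(j : ℕ) + 1, h⟩ ≥
        ∑ i ∈ Finset.univ.filter (fun i : Fin p => (i : ℕ) < (j : ℕ)), a i) :
    2 ^ (p / 2) ≤ ∑ j, a j := by
  set A : ℕ → ℕ := fun i => if h : i < p then a ⟨i, h⟩ else 0 with hA
  have hsum : ∑ j, a j = ∑ i ∈ Finset.range p, A i := by
    rw [← Fin.sum_univ_eq_sum_range]
    exact Finset.sum_congr rfl fun i _ => by simp [hA, i.isLt]
  have hfilt : ∀ j : Fin p,
      (∑ i ∈ Finset.univ.filter (fun i : Fin p => (i : ℕ) < (j : ℕ)), a i)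
        = ∑ i ∈ Finset.range (j : ℕ), A i := by
    intro j
    rw [Finset.sum_filter]
    calc (∑ i : Fin p, if (i : ℕ) < (j : ℕ) then a i else 0)
        = ∑ i ∈ Finset.range p, (if i < (j : ℕ) then A i else 0) := by
          rw [← Fin.sum_univ_eq_sum_range]
          exact Finset.sum_congr rfl fun i _ => by simp [hA, i.isLt]
      _ = ∑ i ∈ Finset.range (j : ℕ), A i := by
          rw [← Finset.sum_filter]
          congr 1
          ext i
          simp only [Finset.mem_filter, Finset.mem_range]
          exact ⟨fun h => h.2, fun h => ⟨h.trans j.isLt, h⟩⟩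
  rw [hsum]
  refine key_nat A p hp (fun i hi => ?_) (fun j hj => ?_)
  · simp only [hA, dif_pos hi]; exact ha _
  · have := hmerge ⟨j, by omega⟩ (by simpa using hj)
    rw [hfilt] at this
    simpa [hA, show j < p by omega, hj] using this

/-- Interval count in a 2-sided gap: left intervals of sizes `a` (ordered from
the left boundary inward) and right intervals of sizes `b` (ordered from the
right boundary inward), each of size at least 1, satisfying the merge rule on
each side; then the total number of intervals is at most `4 log₂ N + 2`,
where `N` is the total number of elements. -/
theorem merge_rule_two_sided_gap_interval_count
    (p q : ℕ) (hp : 1 ≤ p) (hq : 1 ≤ q)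
    (a : Fin p → ℕ) (b : Fin q → ℕ)
    (ha : ∀ j, 1 ≤ a j) (hb : ∀ j, 1 ≤ b j)
    (hmergea : ∀ j : Fin p, ∀ h : (j : ℕ) + 1 < p,
      a j + a ⟨(j : ℕ) + 1, h⟩ ≥
        ∑ i ∈ Finset.univ.filter (fun i : Fin p => (i : ℕ) < (j : ℕ)), a i)
    (hmergeb : ∀ j : Fin q, ∀ h : (j : ℕ) + 1 < q,
      b j + b ⟨(j : ℕ) + 1, h⟩ ≥
        ∑ i ∈ Finset.univ.filter (fun i : Fin q => (i : ℕ) < (j : ℕ)), b i)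
    (N : ℕ) (hN : N = ∑ j, a j + ∑ j, b j) :
    (p + q : ℝ) ≤ 4 * logb 2 (N : ℝ) + 2 := by
  have hA := key_fin p hp a ha hmergea
  have hB := key_fin q hq b hb hmergeb
  have hNA : 2 ^ (p / 2) ≤ N := by omega
  have hNB : 2 ^ (q / 2) ≤ N := by omega
  have hlog : ∀ k : ℕ, 2 ^ k ≤ N → (k : ℝ) ≤ logb 2 (N : ℝ) := by
    intro k hk
    have h1 : ((2 : ℝ) ^ k) ≤ (N : ℝ) := by exact_mod_cast hk
    have h2 : logb 2 ((2 : ℝ) ^ k) ≤ logb 2 (N : ℝ) :=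
      Real.logb_le_logb_of_le (by norm_num) (by positivity) h1
    rwa [Real.logb_pow, Real.logb_self_eq_one (by norm_num), mul_one] at h2
  have hp' := hlog _ hNA
  have hq' := hlog _ hNB
  have hp2 : (p : ℝ) ≤ 2 * ((p / 2 : ℕ) : ℝ) + 1 := by
    have : p ≤ 2 * (p / 2) + 1 := by omega
    exact_mod_cast this
  have hq2 : (q : ℝ) ≤ 2 * ((q / 2 : ℕ) : ℝ) + 1 := by
    have : q ≤ 2 * (q / 2) + 1 := by omega
    exact_mod_cast this
  nlinarith [hp', hq']
end

section
/- Let B ≥ 2 and k ≥ 1 be natural numbers, and let ℓ be a natural number such that ∑_{j=0}^{k-1} B^(2^j) < ℓ and ℓ ≤ ∑_{j=0}^{k} B^(2^j). Then (2 : ℝ)^(k-1) < logb B (ℓ : ℝ) and logb B (ℓ : ℝ) ≤ (2 : ℝ)^k + 1; in particular (2 : ℝ)^k < 2 · logb B (ℓ : ℝ). -/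
open Real

lemma bucket_sum_le (B : ℕ) (hB : 2 ≤ B) : ∀ k : ℕ,
    ∑ j ∈ Finset.range k, B ^ (2 ^ j) ≤ B ^ (2 ^ k) - 1 := by
  intro k
  induction k with
  | zero => simp
  | succ k ih =>
    rw [Finset.sum_range_succ]
    have h2 : 2 ≤ B ^ (2 ^ k) := le_trans hB (Nat.le_self_pow (by positivity) B)
    have hsq : 2 * B ^ (2 ^ k) ≤ B ^ (2 ^ (k + 1)) := by
      rw [pow_succ, pow_mul]
      calc 2 * B ^ (2 ^ k) ≤ B ^ (2 ^ k) * B ^ (2 ^ k) :=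
            Nat.mul_le_mul_right _ h2
        _ = (B ^ (2 ^ k)) ^ 2 := by ring
    omega

/-- If position `ℓ` lies in bucket `b_k` (for `k ≥ 1`), i.e.
`∑_{j<k} B^(2^j) < ℓ ≤ ∑_{j≤k} B^(2^j)`, then
`2^(k-1) < log_B ℓ`, `log_B ℓ ≤ 2^k + 1`, and in particular
`2^k < 2 · log_B ℓ`. -/
theorem bucket_search_cost_theta_log
    (B k ℓ : ℕ) (hB : 2 ≤ B) (hk : 1 ≤ k)
    (hlo : ∑ j ∈ Finset.range k, B ^ (2 ^ j) < ℓ)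
    (hhi : ℓ ≤ ∑ j ∈ Finset.range (k + 1), B ^ (2 ^ j)) :
    (2 : ℝ) ^ (k - 1) < logb (B : ℝ) (ℓ : ℝ) ∧
    logb (B : ℝ) (ℓ : ℝ) ≤ (2 : ℝ) ^ k + 1 ∧
    (2 : ℝ) ^ k < 2 * logb (B : ℝ) (ℓ : ℝ) := by
  have hB1 : (1 : ℝ) < (B : ℝ) := by exact_mod_cast lt_of_lt_of_le one_lt_two hB
  -- lower bound in ℕ
  have hmem : k - 1 ∈ Finset.range k := Finset.mem_range.mpr (by omega)
  have hlow : B ^ (2 ^ (k - 1)) < ℓ :=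
    lt_of_le_of_lt (Finset.single_le_sum (f := fun j => B ^ (2 ^ j))
      (fun _ _ => Nat.zero_le _) hmem) hlo
  -- upper bound in ℕ
  have hup : ℓ ≤ B ^ (2 ^ k + 1) := by
    have h1 := bucket_sum_le B hB k
    have h2 : ∑ j ∈ Finset.range (k + 1), B ^ (2 ^ j)
        = (∑ j ∈ Finset.range k, B ^ (2 ^ j)) + B ^ (2 ^ k) :=
      Finset.sum_range_succ _ _
    have h3 : 2 * B ^ (2 ^ k) ≤ B ^ (2 ^ k + 1) := by
      rw [pow_succ, mul_comm 2]
      exact Nat.mul_le_mul_left _ hB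
    omega
  have hℓpos : (0 : ℝ) < (ℓ : ℝ) := by
    have : 0 < ℓ := lt_of_le_of_lt (Nat.zero_le _) hlo
    exact_mod_cast this
  have hl : (2 : ℝ) ^ (k - 1) < logb (B : ℝ) (ℓ : ℝ) := by
    have h := Real.logb_lt_logb hB1 (by positivity : (0:ℝ) < (B:ℝ) ^ (2 ^ (k-1)))
      (by exact_mod_cast hlow : ((B : ℝ) ^ (2 ^ (k - 1))) < (ℓ : ℝ))
    rwa [Real.logb_pow, Real.logb_self_eq_one hB1, mul_one,
      Nat.cast_pow, Nat.cast_ofNat] at h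
  have hu : logb (B : ℝ) (ℓ : ℝ) ≤ (2 : ℝ) ^ k + 1 := by
    have h := Real.logb_le_logb_of_le (b := (B : ℝ)) hB1 hℓpos
      (by exact_mod_cast hup : (ℓ : ℝ) ≤ (B : ℝ) ^ (2 ^ k + 1))
    rwa [Real.logb_pow, Real.logb_self_eq_one hB1, mul_one,
      Nat.cast_add, Nat.cast_pow, Nat.cast_ofNat, Nat.cast_one] at h
  refine ⟨hl, hu, ?_⟩
  have : (2 : ℝ) ^ k = 2 * (2 : ℝ) ^ (k - 1) := by
    rw [← pow_succ']
    congr 1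
    omega
  rw [this]
  linarith
end
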